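/- Let p be a prime. Suppose a finite solvable group G is acted on by an elementary abelian p-group A with |A| ≥ p^3, the action is good, and C_G(a) is abelian for every nonidentity element a ∈ A. Then G is abelian. -/

import Mathlib

open Pointwise

/-- The subgroup of elements of `G` fixed by every element of a subgroup `B` of `A`. -/
def fixedSubgroup (A G : Type*) [Group A] [Group G] [MulDistribMulAction A G]
    (B : Subgroup A) : Subgroup G where
  carrier := {g | ∀ b ∈ B, b • g = g}
  one_mem' := fun b _ => smul_one b
  mul_mem' := fun {x y} hx hy b hb => by rw [smul_mul', hx b hb, hy b hb]
  inv_mem' := fun {x} hx b hb => by rw [smul_inv', hx b hb]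

/-- The subgroup of elements of `G` fixed by a single element `a` of `A`, i.e. `C_G(a)`. -/
def fixedPointsOf (A G : Type*) [Group A] [Group G] [MulDistribMulAction A G]
    (a : A) : Subgroup G where
  carrier := {g | a • g = g}
  one_mem' := smul_one a
  mul_mem' := fun {x y} hx hy => by
    simp only [Set.mem_setOf_eq] at *; rw [smul_mul', hx, hy]
  inv_mem' := fun {x} hx => by
    simp only [Set.mem_setOf_eq] at *; rw [smul_inv', hx]

/-- The commutator subgroup `[H, B]` for the action of `A` on `G`. -/
def actionCommutator (A G : Type*) [Group A] [Group G] [MulDistribMulAction A G]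
    (H : Subgroup G) (B : Subgroup A) : Subgroup G :=
  Subgroup.closure {x | ∃ h ∈ H, ∃ b ∈ B, x = h⁻¹ * (b • h)}

/-- The action of `A` on `G` is *good* if `H = [H,B] C_H(B)` for every subgroup `B ≤ A`
and every `B`-invariant subgroup `H ≤ G`. -/
def IsGoodAction (A G : Type*) [Group A] [Group G] [MulDistribMulAction A G] : Prop :=
  ∀ (B : Subgroup A) (H : Subgroup G), (∀ b ∈ B, ∀ h ∈ H, b • h ∈ H) →
    (H : Set G) =
      (actionCommutator A G H B : Set G) * ((H ⊓ fixedSubgroup A G B : Subgroup G) : Set G)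

section Aux
variable {A G : Type*} [Group A] [Group G] [MulDistribMulAction A G]

lemma mem_fixedSubgroup {B : Subgroup A} {g : G} :
    g ∈ fixedSubgroup A G B ↔ ∀ b ∈ B, b • g = g := Iff.rfl

lemma actionCommutator_le {H : Subgroup G} {B : Subgroup A}
    (hH : ∀ b ∈ B, ∀ h ∈ H, b • h ∈ H) : actionCommutator A G H B ≤ H := by
  refine (Subgroup.closure_le _).mpr ?_
  rintro x ⟨h, hh, b, hb, rfl⟩
  exact mul_mem (inv_mem hh) (hH b hb h hh)

/-- Action of `A` on an `A`-invariant subgroup. -/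
def invariantSubgroupAction (N : Subgroup G) (hN : ∀ (a : A), ∀ n ∈ N, a • n ∈ N) :
    MulDistribMulAction A ↥N where
  smul a n := ⟨a • (n : G), hN a n n.2⟩
  one_smul n := Subtype.ext (one_smul A (n : G))
  mul_smul a b n := Subtype.ext (mul_smul a b (n : G))
  smul_mul a x y := Subtype.ext (smul_mul' a (x : G) (y : G))
  smul_one a := Subtype.ext (smul_one a)

lemma isGoodAction_subgroup (hgood : IsGoodAction A G) (N : Subgroup G)
    (hN : ∀ (a : A), ∀ n ∈ N, a • n ∈ N) :
    @IsGoodAction A ↥N _ _ (invariantSubgroupAction N hN) := by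
  letI := invariantSubgroupAction N hN
  have hval : ∀ (a : A) (x : ↥N), ((a • x : ↥N) : G) = a • (x : G) := fun _ _ => rfl
  intro B K hK
  set K' : Subgroup G := K.map N.subtype with hK'def
  have hK' : ∀ b ∈ B, ∀ h ∈ K', b • h ∈ K' := by
    rintro b hb h ⟨x, hx, rfl⟩
    exact ⟨b • x, hK b hb x hx, rfl⟩
  have hgood' := hgood B K' hK'
  have hACmap : (actionCommutator A ↥N K B).map N.subtype = actionCommutator A G K' B := by
    rw [actionCommutator, actionCommutator, MonoidHom.map_closure]
    congr 1
    ext y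
    constructor
    · rintro ⟨z, ⟨h, hh, b, hb, rfl⟩, rfl⟩
      exact ⟨(h : G), ⟨h, hh, rfl⟩, b, hb, rfl⟩
    · rintro ⟨h, ⟨h', hh', rfl⟩, b, hb, rfl⟩
      exact ⟨(h')⁻¹ * (b • h'), ⟨h', hh', b, hb, rfl⟩, rfl⟩
  ext x
  constructor
  · intro hx
    have hxG : (x : G) ∈ (K' : Set G) := ⟨x, hx, rfl⟩
    rw [hgood'] at hxG
    obtain ⟨u, hu, v, hv, huv⟩ := hxG
    have huN : u ∈ (actionCommutator A ↥N K B).map N.subtype := hACmap ▸ hu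
    obtain ⟨u', hu', rfl⟩ := huN
    obtain ⟨⟨v', hv'K, rfl⟩, hvC⟩ := hv
    have hv'C : v' ∈ fixedSubgroup A ↥N B := by
      intro b hb
      exact Subtype.ext (hvC b hb)
    have : x = u' * v' := Subtype.ext (by rw [← huv]; rfl)
    rw [this]
    exact Set.mul_mem_mul hu' ⟨hv'K, hv'C⟩
  · rintro ⟨u, hu, v, hv, rfl⟩
    exact mul_mem (actionCommutator_le hK hu) hv.1

end Aux

section Quot
variable {A G : Type*} [Group A] [Group G] [MulDistribMulAction A G]

/-- Action of `A` on the quotient by an `A`-invariant normal subgroup. -/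
def quotientAction (N : Subgroup G) [N.Normal] (hN : ∀ (a : A), ∀ n ∈ N, a • n ∈ N) :
    MulDistribMulAction A (G ⧸ N) where
  smul a := Quotient.map' (a • ·) (by
    intro x y h
    rw [QuotientGroup.leftRel_apply] at h ⊢
    have : a • (x⁻¹ * y) ∈ N := hN a _ h
    rwa [smul_mul', smul_inv'] at this)
  one_smul x := QuotientGroup.induction_on x (fun g => congrArg QuotientGroup.mk (one_smul A g))
  mul_smul a b x := QuotientGroup.induction_on x
    (fun g => congrArg QuotientGroup.mk (mul_smul a b g))
  smul_mul a x y := QuotientGroup.induction_on x (fun g => QuotientGroup.induction_on y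
    (fun g' => congrArg QuotientGroup.mk (smul_mul' a g g')))
  smul_one a := congrArg QuotientGroup.mk (smul_one a)

lemma isGoodAction_quotient (hgood : IsGoodAction A G) (N : Subgroup G) [N.Normal]
    (hN : ∀ (a : A), ∀ n ∈ N, a • n ∈ N) :
    @IsGoodAction A (G ⧸ N) _ _ (quotientAction N hN) := by
  letI := quotientAction N hN
  have hmk : ∀ (a : A) (g : G), a • (QuotientGroup.mk g : G ⧸ N) = QuotientGroup.mk (a • g) :=
    fun _ _ => rfl
  intro B K hK
  set K' : Subgroup G := K.comap (QuotientGroup.mk' N) with hK'def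
  have hK' : ∀ b ∈ B, ∀ h ∈ K', b • h ∈ K' := by
    intro b hb h hh
    have : (QuotientGroup.mk (b • h) : G ⧸ N) = b • QuotientGroup.mk h := rfl
    simp only [hK'def, Subgroup.mem_comap, QuotientGroup.mk'_apply] at hh ⊢
    rw [this]
    exact hK b hb _ hh
  have hgood' := hgood B K' hK'
  ext x
  constructor
  · intro hx
    obtain ⟨g, rfl⟩ := QuotientGroup.mk_surjective x
    have hg : g ∈ (K' : Set G) := hx
    rw [hgood'] at hg
    obtain ⟨u, hu, v, hv, huv⟩ := hg
    have huK : QuotientGroup.mk u ∈ actionCommutator A (G ⧸ N) K B := by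
      have : (actionCommutator A G K' B).map (QuotientGroup.mk' N) ≤
          actionCommutator A (G ⧸ N) K B := by
        rw [actionCommutator, MonoidHom.map_closure]
        refine Subgroup.closure_le _ |>.mpr ?_
        rintro y ⟨z, ⟨h, hh, b, hb, rfl⟩, rfl⟩
        refine Subgroup.subset_closure ?_
        exact ⟨QuotientGroup.mk h, hh, b, hb, by simp [hmk]⟩
      exact this ⟨u, hu, rfl⟩
    have hvK : QuotientGroup.mk v ∈ K ⊓ fixedSubgroup A (G ⧸ N) B := by
      refine ⟨hv.1, fun b hb => ?_⟩
      rw [hmk, hv.2 b hb]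
    rw [← huv]
    exact Set.mul_mem_mul huK hvK
  · rintro ⟨u, hu, v, hv, rfl⟩
    exact mul_mem (actionCommutator_le hK hu) hv.1

/-- Fixed points in the quotient lift to fixed points, given goodness. -/
lemma fixed_quotient_lift (hgood : IsGoodAction A G) (N : Subgroup G) [N.Normal]
    (hN : ∀ (a : A), ∀ n ∈ N, a • n ∈ N) (B : Subgroup A) (x : G ⧸ N)
    (hx : ∀ b ∈ B, (quotientAction N hN).smul b x = x) :
    ∃ v ∈ fixedSubgroup A G B, QuotientGroup.mk v = x := by
  letI := quotientAction N hN
  set H : Subgroup G := (fixedSubgroup A (G ⧸ N) B).comap (QuotientGroup.mk' N) with hHdef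
  have hHinv : ∀ b ∈ B, ∀ h ∈ H, b • h ∈ H := by
    intro b hb h hh
    simp only [hHdef, Subgroup.mem_comap, QuotientGroup.mk'_apply, mem_fixedSubgroup] at hh ⊢
    intro b' hb'
    have h1 : (QuotientGroup.mk (b • h) : G ⧸ N) = b • QuotientGroup.mk h := rfl
    rw [h1, hh b hb, hh b' hb']
  have hgood' := hgood B H hHinv
  obtain ⟨g, rfl⟩ := QuotientGroup.mk_surjective x
  have hgH : g ∈ (H : Set G) := by
    simp only [hHdef, SetLike.mem_coe, Subgroup.mem_comap, QuotientGroup.mk'_apply,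
      mem_fixedSubgroup]
    exact hx
  rw [hgood'] at hgH
  obtain ⟨u, hu, v, hv, huv⟩ := hgH
  have huN : u ∈ N := by
    have : actionCommutator A G H B ≤ N := by
      refine (Subgroup.closure_le _).mpr ?_
      rintro y ⟨h, hh, b, hb, rfl⟩
      simp only [hHdef, Subgroup.mem_comap, QuotientGroup.mk'_apply, mem_fixedSubgroup] at hh
      have h1 : (QuotientGroup.mk (b • h) : G ⧸ N) = b • QuotientGroup.mk h := rfl
      have h2 : (QuotientGroup.mk (b • h) : G ⧸ N) = QuotientGroup.mk h := by
        rw [h1, hh b hb]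
      have := QuotientGroup.eq.mp h2.symm
      simpa using this
    exact this hu
  refine ⟨v, hv.2, ?_⟩
  rw [← huv]
  have : (QuotientGroup.mk (u * v) : G ⧸ N) = QuotientGroup.mk u * QuotientGroup.mk v := rfl
  rw [this, (QuotientGroup.eq_one_iff u).mpr huN, one_mul]

end Quot

section Schur
variable {A G : Type*} [Group A] [Group G] [MulDistribMulAction A G]

/-- If `A` is abelian of exponent `p` and acts on a nontrivial abelian group `G` with no
nontrivial proper `A`-invariant subgroup, then a subgroup of `A` of index at most `p`
acts trivially. -/
lemma exists_large_trivial_subgroup {p : ℕ} (hp : p.Prime) [Finite A] [Finite G]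
    (hAcomm : ∀ x y : A, x * y = y * x) (hAelem : ∀ a : A, a ^ p = 1)
    (hG : ∃ g : G, g ≠ 1) (hcomm : ∀ x y : G, x * y = y * x)
    (hsimple : ∀ K : Subgroup G, (∀ a : A, ∀ n ∈ K, a • n ∈ K) → K = ⊥ ∨ K = ⊤) :
    ∃ B : Subgroup A, Nat.card A ≤ p * Nat.card B ∧ ∀ b ∈ B, ∀ g : G, b • g = g := by
  letI : CommGroup G := { (inferInstance : Group G) with mul_comm := hcomm }
  -- the action as a monoid hom into additive endomorphisms
  let φ : A →* AddMonoid.End (Additive G) :=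
    { toFun := fun a => AddMonoidHom.mk' (fun g => Additive.ofMul (a • g.toMul))
        (fun x y => congrArg Additive.ofMul (smul_mul' a x.toMul y.toMul))
      map_one' := AddMonoidHom.ext fun g => congrArg Additive.ofMul (one_smul A g.toMul)
      map_mul' := fun a b => AddMonoidHom.ext fun g =>
        congrArg Additive.ofMul (mul_smul a b g.toMul) }
  have hφapp : ∀ (a : A) (g : G), φ a (Additive.ofMul g) = Additive.ofMul (a • g) :=
    fun _ _ => rfl
  let R : Subring (AddMonoid.End (Additive G)) := Subring.closure (Set.range φ)
  have hmemR : ∀ a : A, φ a ∈ R := fun a => Subring.subset_closure ⟨a, rfl⟩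
  letI : CommRing ↥R := Subring.closureCommRingOfComm (by
    rintro x ⟨a, rfl⟩ y ⟨b, rfl⟩
    rw [← map_mul, ← map_mul, hAcomm])
  -- multiplicative kernel of an element of R, as a subgroup of G
  let ker' : ↥R → Subgroup G := fun s =>
    { carrier := {g : G | (s : AddMonoid.End (Additive G)) (Additive.ofMul g) = 0}
      one_mem' := map_zero (s : AddMonoid.End (Additive G))
      mul_mem' := fun {x y} hx hy => by
        have : (s : AddMonoid.End (Additive G)) (Additive.ofMul x + Additive.ofMul y) = 0 := by
          rw [map_add, hx, hy, add_zero]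
        exact this
      inv_mem' := fun {x} hx => by
        have : (s : AddMonoid.End (Additive G)) (-(Additive.ofMul x)) = 0 := by
          rw [map_neg, hx, neg_zero]
        exact this }
  have hkermem : ∀ (s : ↥R) (g : G),
      g ∈ ker' s ↔ (s : AddMonoid.End (Additive G)) (Additive.ofMul g) = 0 := fun _ _ => Iff.rfl
  have hkerinv : ∀ s : ↥R, ∀ a : A, ∀ g ∈ ker' s, a • g ∈ ker' s := by
    intro s a g hg
    have hcom : (⟨φ a, hmemR a⟩ * s : ↥R) = s * ⟨φ a, hmemR a⟩ := mul_comm _ _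
    have hcom' : ∀ x, φ a ((s : AddMonoid.End (Additive G)) x) =
        (s : AddMonoid.End (Additive G)) (φ a x) := by
      intro x
      calc φ a ((s : AddMonoid.End (Additive G)) x)
          = ((⟨φ a, hmemR a⟩ * s : ↥R) : AddMonoid.End (Additive G)) x := rfl
        _ = ((s * ⟨φ a, hmemR a⟩ : ↥R) : AddMonoid.End (Additive G)) x := by rw [hcom]
        _ = (s : AddMonoid.End (Additive G)) (φ a x) := rfl
    rw [hkermem] at hg ⊢
    rw [← hφapp, ← hcom', hg, map_zero]
  have hker0 : ∀ s : ↥R, ker' s = ⊤ → s = 0 := by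
    intro s hs
    refine Subtype.ext (AddMonoidHom.ext fun x => ?_)
    have : x.toMul ∈ ker' s := hs ▸ Subgroup.mem_top _
    exact this
  letI : Nontrivial ↥R := by
    obtain ⟨g, hg⟩ := hG
    refine ⟨1, 0, fun h => hg ?_⟩
    have := congrArg (fun r : ↥R => (r : AddMonoid.End (Additive G)) (Additive.ofMul g)) h
    simpa using this
  letI : NoZeroDivisors ↥R := by
    constructor
    intro r s hrs
    by_cases hr : r = 0
    · exact Or.inl hr
    right
    have hKr : ker' r = ⊥ := by
      rcases hsimple (ker' r) (hkerinv r) with h | h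
      · exact h
      · exact absurd (hker0 r h) hr
    refine Subtype.ext (AddMonoidHom.ext fun x => ?_)
    have hx : (r : AddMonoid.End (Additive G)) ((s : AddMonoid.End (Additive G)) x) = 0 := by
      have := congrArg (fun t : ↥R => (t : AddMonoid.End (Additive G)) x) hrs
      simpa using this
    have : ((s : AddMonoid.End (Additive G)) x).toMul ∈ ker' r := hx
    rw [hKr] at this
    have h0 : (s : AddMonoid.End (Additive G)) x = 0 := by simpa using this
    exact h0
  letI : IsDomain ↥R := NoZeroDivisors.to_isDomain _
  haveI : Finite (AddMonoid.End (Additive G)) :=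
    Finite.of_injective (fun f => (f : Additive G → Additive G)) DFunLike.coe_injective
  haveI : Finite ↥R := Subtype.finite
  -- the action hom restricted to R, then to its units
  let φ' : A →* ↥R := φ.codRestrict R.toSubmonoid hmemR
  let ψ : A →* (↥R)ˣ := φ'.toHomUnits
  haveI : IsCyclic ψ.range := isCyclic_of_subgroup_isDomain
    ((Units.coeHom ↥R).comp ψ.range.subtype)
    (fun x y h => Subtype.ext (Units.ext h))
  have hrange : Nat.card ψ.range ≤ p := by
    obtain ⟨g, hg⟩ := IsCyclic.exists_generator (α := ψ.range)
    have hgp : g ^ p = 1 := by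
      obtain ⟨⟨x, a, rfl⟩, rfl⟩ : ∃ x, x = g := ⟨g, rfl⟩
      refine Subtype.ext ?_
      show ψ a ^ p = 1
      rw [← map_pow, hAelem, map_one]
    have := orderOf_eq_card_of_forall_mem_zpowers hg
    have hdvd : orderOf g ∣ p := orderOf_dvd_of_pow_eq_one hgp
    calc Nat.card ψ.range = orderOf g := this.symm
      _ ≤ p := Nat.le_of_dvd hp.pos hdvd
  refine ⟨ψ.ker, ?_, ?_⟩
  · have h1 : Nat.card A = Nat.card (A ⧸ ψ.ker) * Nat.card ψ.ker :=
      Subgroup.card_eq_card_quotient_mul_card_subgroup _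
    have h2 : Nat.card (A ⧸ ψ.ker) = Nat.card ψ.range :=
      Nat.card_congr (QuotientGroup.quotientKerEquivRange ψ).toEquiv
    rw [h1, h2]
    exact Nat.mul_le_mul_right _ hrange
  · intro b hb g
    have : ψ b = 1 := hb
    have hφ'b : φ' b = 1 := by
      have := congrArg (Units.val) this
      rwa [MonoidHom.coe_toHomUnits] at this
    have hφb : φ b = 1 := congrArg Subtype.val hφ'b
    have := congrArg (fun f : AddMonoid.End (Additive G) => (f (Additive.ofMul g)).toMul) hφb
    simpa [hφapp] using this

end Schur

section Gen

open scoped commutatorElement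

lemma derivedSeries_eq_top (G : Type*) [Group G] (h : commutator G = ⊤) :
    ∀ n, derivedSeries G n = ⊤ := by
  intro n
  induction n with
  | zero => rfl
  | succ n ih => rw [derivedSeries_succ, ih, ← commutator_def, h]

lemma commutator_ne_top_of_solvable (G : Type*) [Group G] [Group.IsSolvable G] [Nontrivial G] :
    commutator G ≠ ⊤ := by
  intro h
  obtain ⟨n, hn⟩ := (isSolvable_def G).mp ‹_›
  rw [derivedSeries_eq_top G h n] at hn
  exact absurd hn.symm bot_ne_top

universe uG

lemma gen_lemma {p : ℕ} (hp : p.Prime) {A : Type*} [Group A] [Finite A]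
    (hAcomm : ∀ x y : A, x * y = y * x) (hAelem : ∀ a : A, a ^ p = 1) :
    ∀ (n : ℕ) (G : Type uG) [Group G] [Finite G] [MulDistribMulAction A G],
      Nat.card G ≤ n → IsSolvable G → IsGoodAction A G →
      ∀ g : G, g ∈ Subgroup.closure
        (⋃ B ∈ {B : Subgroup A | Nat.card A ≤ p * Nat.card B},
          (fixedSubgroup A G B : Set G)) := by
  intro n
  induction n with
  | zero =>
    intro G _ _ _ hcard
    have : 0 < Nat.card G := Nat.card_pos
    omega
  | succ n IH =>
    intro G _ _ _ hcard hsolv hgood g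
    set S : Set (Subgroup A) := {B : Subgroup A | Nat.card A ≤ p * Nat.card B} with hSdef
    set M : Subgroup G := Subgroup.closure (⋃ B ∈ S, (fixedSubgroup A G B : Set G)) with hMdef
    show g ∈ M
    by_cases htriv : Subsingleton G
    · rw [Subsingleton.elim g 1]; exact one_mem M
    haveI : Nontrivial G := not_subsingleton_iff_nontrivial.mp htriv
    by_cases hex : ∃ N : Subgroup G, N.Normal ∧ (∀ a : A, ∀ x ∈ N, a • x ∈ N) ∧ N ≠ ⊥ ∧ N ≠ ⊤
    · obtain ⟨N, hNnorm, hNinv, hNbot, hNtop⟩ := hex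
      haveI := hNnorm
      letI instN := invariantSubgroupAction N hNinv
      -- every element of N is in M
      have cardN_le : Nat.card ↥N ≤ n := by
        have hdvd := Subgroup.card_subgroup_dvd_card N
        have hne : Nat.card ↥N ≠ Nat.card G := fun h => hNtop (Subgroup.eq_top_of_card_eq N h)
        have hle : Nat.card ↥N ≤ Nat.card G := Nat.le_of_dvd Nat.card_pos hdvd
        omega
      have hNsub : ∀ x ∈ N, x ∈ M := by
        intro x hx
        have hgen := IH ↥N cardN_le (by haveI : Group.IsSolvable G := hsolv; exact (inferInstance : Group.IsSolvable ↥N)) (isGoodAction_subgroup hgood N hNinv) ⟨x, hx⟩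
        have hle : Subgroup.closure (⋃ B ∈ S, (fixedSubgroup A ↥N B : Set ↥N)) ≤
            M.comap N.subtype := by
          refine (Subgroup.closure_le _).mpr ?_
          intro y hy
          simp only [Set.mem_iUnion] at hy
          obtain ⟨B, hB, hyB⟩ := hy
          show (y : G) ∈ M
          refine Subgroup.subset_closure ?_
          refine Set.mem_iUnion.mpr ⟨B, Set.mem_iUnion.mpr ⟨hB, ?_⟩⟩
          intro b hb
          exact congrArg Subtype.val (hyB b hb)
        exact hle hgen
      -- the quotient
      letI instQ := quotientAction N hNinv
      have cardQ_le : Nat.card (G ⧸ N) ≤ n := by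
        have h1 : Nat.card G = Nat.card (G ⧸ N) * Nat.card ↥N :=
          Subgroup.card_eq_card_quotient_mul_card_subgroup N
        have h2 : 2 ≤ Nat.card ↥N := (Subgroup.one_lt_card_iff_ne_bot N).mpr hNbot
        have h3 : 0 < Nat.card (G ⧸ N) := Nat.card_pos
        have h4 : Nat.card (G ⧸ N) * 2 ≤ Nat.card (G ⧸ N) * Nat.card ↥N :=
          Nat.mul_le_mul_left _ h2
        omega
      have hquot := IH (G ⧸ N) cardQ_le (by haveI : Group.IsSolvable G := hsolv; exact (inferInstance : Group.IsSolvable (G ⧸ N))) (isGoodAction_quotient hgood N hNinv)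
        (QuotientGroup.mk g)
      have hle : Subgroup.closure (⋃ B ∈ S, (fixedSubgroup A (G ⧸ N) B : Set (G ⧸ N))) ≤
          M.map (QuotientGroup.mk' N) := by
        refine (Subgroup.closure_le _).mpr ?_
        intro y hy
        simp only [Set.mem_iUnion] at hy
        obtain ⟨B, hB, hyB⟩ := hy
        obtain ⟨v, hv, rfl⟩ := fixed_quotient_lift hgood N hNinv B y (fun b hb => hyB b hb)
        exact ⟨v, Subgroup.subset_closure
          (Set.mem_iUnion.mpr ⟨B, Set.mem_iUnion.mpr ⟨hB, hv⟩⟩), rfl⟩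
      obtain ⟨m, hm, hmg⟩ := hle hquot
      have hmem : m⁻¹ * g ∈ N := QuotientGroup.eq.mp hmg
      have : g = m * (m⁻¹ * g) := by group
      rw [this]
      exact mul_mem hm (hNsub _ hmem)
    · -- A-simple case
      push_neg at hex
      have hsimple0 : ∀ N : Subgroup G, N.Normal → (∀ a : A, ∀ x ∈ N, a • x ∈ N) →
          N = ⊥ ∨ N = ⊤ := by
        intro N h1 h2
        by_cases hb : N = ⊥
        · exact Or.inl hb
        · exact Or.inr (hex N h1 h2 hb)
      -- commutator is invariant
      have hcommutinv : ∀ a : A, ∀ x ∈ commutator G, a • x ∈ commutator G := by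
        intro a x hx
        have h1 : (commutator G).map (MulDistribMulAction.toMonoidHom G a) ≤ commutator G := by
          rw [commutator_def, Subgroup.map_commutator]
          exact Subgroup.commutator_mono le_top le_top
        exact h1 ⟨x, hx, rfl⟩
      have hcommBot : commutator G = ⊥ := by
        rcases hsimple0 (commutator G) inferInstance hcommutinv with h | h
        · exact h
        · exact absurd h (by haveI : Group.IsSolvable G := hsolv; exact commutator_ne_top_of_solvable G)
      have hcomm : ∀ x y : G, x * y = y * x := by
        intro x y
        have : ⁅x, y⁆ ∈ commutator G :=
          Subgroup.commutator_mem_commutator (Subgroup.mem_top x) (Subgroup.mem_top y)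
        rw [hcommBot, Subgroup.mem_bot] at this
        exact commutatorElement_eq_one_iff_commute.mp this
      have hsimple : ∀ K : Subgroup G, (∀ a : A, ∀ x ∈ K, a • x ∈ K) → K = ⊥ ∨ K = ⊤ := by
        intro K hK
        refine hsimple0 K ⟨fun k hk gg => ?_⟩ hK
        rw [hcomm gg k, mul_assoc, mul_inv_cancel, mul_one]
        exact hk
      obtain ⟨x, hx⟩ := exists_ne (1 : G)
      obtain ⟨B, hBcard, hBtriv⟩ := exists_large_trivial_subgroup hp hAcomm hAelem
        ⟨x, hx⟩ hcomm hsimple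
      refine Subgroup.subset_closure ?_
      refine Set.mem_iUnion.mpr ⟨B, Set.mem_iUnion.mpr ⟨hBcard, ?_⟩⟩
      intro b hb
      exact hBtriv b hb g

end Gen

lemma closure_comm {G : Type*} [Group G] {s : Set G}
    (h : ∀ x ∈ s, ∀ y ∈ s, Commute x y) :
    ∀ x ∈ Subgroup.closure s, ∀ y ∈ Subgroup.closure s, Commute x y := by
  have inner : ∀ z ∈ s, ∀ y ∈ Subgroup.closure s, Commute z y := by
    intro z hz y hy
    refine Subgroup.closure_induction (fun w hw => h z hz w hw) (Commute.one_right z)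
      (fun a b _ _ ha hb => Commute.mul_right ha hb)
      (fun a _ ha => Commute.inv_right ha) hy
  intro x hx y hy
  refine Subgroup.closure_induction (fun z hz => inner z hz y hy) (Commute.one_left y)
    (fun a b _ _ ha hb => Commute.mul_left ha hb)
    (fun a _ ha => Commute.inv_left ha) hx


/-- (Lemma 3.1) If an elementary abelian `p`-group `A` with `|A| ≥ p^3`
acts goodly on a finite solvable group `G` and `C_G(a)` is abelian for every `1 ≠ a ∈ A`,
then `G` is abelian. -/
theorem stmt10 {p : ℕ} (hp : p.Prime)
    (G A : Type*) [Group G] [Group A] [Finite G] [Finite A] [MulDistribMulAction A G]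
    (hGsolv : IsSolvable G)
    (hAcomm : ∀ x y : A, x * y = y * x) (hAelem : ∀ a : A, a ^ p = 1)
    (hAcard : p ^ 3 ≤ Nat.card A)
    (hgood : IsGoodAction A G)
    (hcent : ∀ a : A, a ≠ 1 → ∀ x ∈ fixedPointsOf A G a, ∀ y ∈ fixedPointsOf A G a,
      Commute x y) :
    ∀ x y : G, Commute x y := by
  set S : Set (Subgroup A) := {B : Subgroup A | Nat.card A ≤ p * Nat.card B} with hSdef
  set U : Set G := ⋃ B ∈ S, (fixedSubgroup A G B : Set G) with hUdef
  have hgen : ∀ g : G, g ∈ Subgroup.closure U :=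
    gen_lemma hp hAcomm hAelem (Nat.card G) G le_rfl hGsolv hgood
  have hindex : ∀ B ∈ S, B.index ≤ p := by
    intro B hB
    have h1 : B.index * Nat.card B = Nat.card A := B.index_mul_card
    have h2 : 0 < Nat.card B := Nat.card_pos
    have h3 : B.index * Nat.card B ≤ p * Nat.card B := by rw [h1]; exact hB
    exact Nat.le_of_mul_le_mul_right h3 h2
  have hcommU : ∀ x ∈ U, ∀ y ∈ U, Commute x y := by
    intro x hx y hy
    simp only [hUdef, Set.mem_iUnion] at hx hy
    obtain ⟨B₁, hB₁, hxB⟩ := hx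
    obtain ⟨B₂, hB₂, hyB⟩ := hy
    -- B₁ ⊓ B₂ is nontrivial
    have hinf : 2 ≤ Nat.card ↥(B₁ ⊓ B₂) := by
      have h1 : (B₁ ⊓ B₂).index ≤ p * p :=
        le_trans (Subgroup.index_inf_le (H := B₁) (K := B₂))
          (Nat.mul_le_mul (hindex B₁ hB₁) (hindex B₂ hB₂))
      have h2 : (B₁ ⊓ B₂).index * Nat.card ↥(B₁ ⊓ B₂) = Nat.card A :=
        (B₁ ⊓ B₂).index_mul_card
      have h3 : p * p * p ≤ (B₁ ⊓ B₂).index * Nat.card ↥(B₁ ⊓ B₂) := by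
        rw [h2]; calc p * p * p = p ^ 3 := by ring
          _ ≤ Nat.card A := hAcard
      have h4 : (B₁ ⊓ B₂).index * Nat.card ↥(B₁ ⊓ B₂) ≤
          p * p * Nat.card ↥(B₁ ⊓ B₂) := Nat.mul_le_mul_right _ h1
      have h5 : p ≤ Nat.card ↥(B₁ ⊓ B₂) := by
        have hpp : 0 < p * p := Nat.mul_pos hp.pos hp.pos
        have := le_trans h3 h4
        exact Nat.le_of_mul_le_mul_left this hpp
      exact le_trans hp.two_le h5
    have hne : (B₁ ⊓ B₂) ≠ ⊥ := by
      intro h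
      rw [h, Subgroup.card_bot] at hinf
      omega
    obtain ⟨c, hc, hc1⟩ : ∃ c ∈ B₁ ⊓ B₂, c ≠ 1 := by
      by_contra h
      push_neg at h
      exact hne ((Subgroup.eq_bot_iff_forall _).mpr h)
    have hxc : x ∈ fixedPointsOf A G c := hxB c hc.1
    have hyc : y ∈ fixedPointsOf A G c := hyB c hc.2
    exact hcent c hc1 x hxc y hyc
  intro x y
  exact closure_comm hcommU x (hgen x) y (hgen y)
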